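/- Linear fractional transformation of M-functions under change of boundary condition: Let α, γ ∈ ℂ^{m×2m} satisfy αα*=I_m, αJα*=0, γγ*=I_m, γJγ*=0. Let Ψ_α̃, Ψ_γ̃ be the fundamental solutions normalized by Ψ̂_α̃(z,k₀) = I_ρ(k₀)^{-1/2}(α* Jα*) and Ψ̂_γ̃(z,k₀) = I_ρ(k₀)^{-1/2}(γ* Jγ*). Then, whenever the relevant inverses exist, the corresponding M-functions M_α̃ = M(z,ℓ,k₀,α̃,β̃) and M_γ̃ = M(z,ℓ,k₀,γ̃,β̃) (same β at ℓ) are related by M_α̃ = [−αJγ* + αγ* M_γ̃][αγ* + αJγ* M_γ̃]^{-1}. -/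

import Mathlib

open Matrix ComplexOrder

/-- The standard 2m×2m symplectic matrix J = [[0, I], [-I, 0]]. -/
def Jmat (m : ℕ) : Matrix (Fin m ⊕ Fin m) (Fin m ⊕ Fin m) ℂ :=
  Matrix.fromBlocks 0 1 (-1) 0

/-- The square root of a positive semidefinite matrix, as defined in the older Mathlib
(removed since). -/
noncomputable def Matrix.PosSemidef.sqrt {n 𝕜 : Type*} [Fintype n] [DecidableEq n] [RCLike 𝕜]
    {A : Matrix n n 𝕜} (hA : A.PosSemidef) : Matrix n n 𝕜 :=
  hA.1.eigenvectorUnitary.1 * diagonal ((↑) ∘ Real.sqrt ∘ hA.1.eigenvalues) *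
    (star hA.1.eigenvectorUnitary : Matrix n n 𝕜)

/-- Cancel an invertible matrix on the left of a zero product. -/
lemma stmt10_cancel {m n : ℕ} {M : Matrix (Fin m) (Fin m) ℂ} {X : Matrix (Fin m) (Fin n) ℂ}
    (hM : IsUnit M) (h : M * X = 0) : X = 0 := by
  have hd : IsUnit M.det := (Matrix.isUnit_iff_isUnit_det M).mp hM
  calc X = M⁻¹ * (M * X) := (Matrix.nonsing_inv_mul_cancel_left M X hd).symm
    _ = 0 := by rw [h]; simp

lemma stmt10_fromRows_add {m n : ℕ} (A B : Matrix (Fin m) (Fin n) ℂ)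
    (C D : Matrix (Fin m) (Fin n) ℂ) :
    fromRows (A + C) (B + D) = fromRows A B + fromRows C D := by
  ext (i | i) j <;> simp

/-- Uniqueness: a solution of the recursion vanishing at the data (X₁ k₀, X₂ (k₀+1))
vanishes everywhere. -/
lemma stmt10_unique {m : ℕ} (ρ : ℤ → Matrix (Fin m) (Fin m) ℂ)
    (C : ℤ → Matrix (Fin m ⊕ Fin m) (Fin m ⊕ Fin m) ℂ)
    (hρ : ∀ k, IsUnit (ρ k))
    (h12 : ∀ k, IsUnit ((C k).toBlocks₁₂)) (h21 : ∀ k, IsUnit ((C k).toBlocks₂₁))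
    (X₁ X₂ : ℤ → Matrix (Fin m) (Fin m) ℂ)
    (hsol : ∀ k : ℤ, fromRows (ρ k * X₂ (k + 1)) (ρ (k - 1) * X₁ (k - 1))
        = C k * fromRows (X₁ k) (X₂ k))
    (k₀ : ℤ) (h1 : X₁ k₀ = 0) (h2 : X₂ (k₀ + 1) = 0) :
    ∀ k : ℤ, X₁ k = 0 ∧ X₂ (k + 1) = 0 := by
  have e : ∀ k : ℤ,
      ρ k * X₂ (k + 1) = (C k).toBlocks₁₁ * X₁ k + (C k).toBlocks₁₂ * X₂ k ∧
      ρ (k - 1) * X₁ (k - 1) = (C k).toBlocks₂₁ * X₁ k + (C k).toBlocks₂₂ * X₂ k := by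
    intro k
    have h := hsol k
    rw [← Matrix.fromBlocks_toBlocks (C k), Matrix.fromBlocks_mul_fromRows,
      Matrix.fromRows_inj.eq_iff] at h
    exact h
  have key : ∀ n : ℤ, X₁ (k₀ + n) = 0 ∧ X₂ (k₀ + n + 1) = 0 := by
    intro n
    induction n using Int.induction_on with
    | zero => simpa using ⟨h1, h2⟩
    | succ n ih =>
      have hk : k₀ + (n + 1 : ℤ) = (k₀ + n) + 1 := by ring
      rw [hk]
      have e2 := (e ((k₀ + n) + 1)).2
      rw [add_sub_cancel_right, ih.1, ih.2, mul_zero, mul_zero, add_zero] at e2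
      have hX1 : X₁ ((k₀ + n) + 1) = 0 := stmt10_cancel (h21 _) e2.symm
      refine ⟨hX1, ?_⟩
      have e1 := (e ((k₀ + n) + 1)).1
      rw [hX1, ih.2, mul_zero, mul_zero, add_zero] at e1
      exact stmt10_cancel (hρ _) e1
    | pred n ih =>
      have hk : k₀ + (-n - 1 : ℤ) = (k₀ + -n) - 1 := by ring
      have hk2 : k₀ + (-n : ℤ) - 1 + 1 = k₀ + -n := by ring
      rw [hk, hk2]
      have e1 := (e (k₀ + -n)).1
      rw [ih.1, ih.2, mul_zero, mul_zero, zero_add] at e1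
      have hX2 : X₂ (k₀ + -n) = 0 := stmt10_cancel (h12 _) e1.symm
      refine ⟨?_, hX2⟩
      have e2 := (e (k₀ + -n)).2
      rw [ih.1, hX2, mul_zero, mul_zero, add_zero] at e2
      exact stmt10_cancel (hρ _) e2
  intro k
  have := key (k - k₀)
  rwa [add_sub_cancel] at this
  -- maybe name differs

/-- A right linear combination of two solutions is a solution. -/
lemma stmt10_comb {m : ℕ} (ρ : ℤ → Matrix (Fin m) (Fin m) ℂ)
    (C : ℤ → Matrix (Fin m ⊕ Fin m) (Fin m ⊕ Fin m) ℂ)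
    (X₁ X₂ Y₁ Y₂ : ℤ → Matrix (Fin m) (Fin m) ℂ)
    (N P : Matrix (Fin m) (Fin m) ℂ)
    (hX : ∀ k : ℤ, fromRows (ρ k * X₂ (k + 1)) (ρ (k - 1) * X₁ (k - 1))
        = C k * fromRows (X₁ k) (X₂ k))
    (hY : ∀ k : ℤ, fromRows (ρ k * Y₂ (k + 1)) (ρ (k - 1) * Y₁ (k - 1))
        = C k * fromRows (Y₁ k) (Y₂ k)) :
    ∀ k : ℤ, fromRows (ρ k * (X₂ (k + 1) * N + Y₂ (k + 1) * P))
        (ρ (k - 1) * (X₁ (k - 1) * N + Y₁ (k - 1) * P))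
      = C k * fromRows (X₁ k * N + Y₁ k * P) (X₂ k * N + Y₂ k * P) := by
  intro k
  calc fromRows (ρ k * (X₂ (k + 1) * N + Y₂ (k + 1) * P))
        (ρ (k - 1) * (X₁ (k - 1) * N + Y₁ (k - 1) * P))
      = fromRows (ρ k * X₂ (k + 1)) (ρ (k - 1) * X₁ (k - 1)) * N
        + fromRows (ρ k * Y₂ (k + 1)) (ρ (k - 1) * Y₁ (k - 1)) * P := by
        rw [Matrix.fromRows_mul, Matrix.fromRows_mul, ← stmt10_fromRows_add]
        simp only [mul_add, mul_assoc]
    _ = C k * fromRows (X₁ k) (X₂ k) * N + C k * fromRows (Y₁ k) (Y₂ k) * P := by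
        rw [hX k, hY k]
    _ = C k * fromRows (X₁ k * N + Y₁ k * P) (X₂ k * N + Y₂ k * P) := by
        rw [stmt10_fromRows_add, ← Matrix.fromRows_mul, ← Matrix.fromRows_mul,
          Matrix.mul_add, ← Matrix.mul_assoc, ← Matrix.mul_assoc]

/-- Difference of two solutions is a solution (of the same linear recursion). -/
lemma stmt10_sub {m : ℕ} (ρ : ℤ → Matrix (Fin m) (Fin m) ℂ)
    (C : ℤ → Matrix (Fin m ⊕ Fin m) (Fin m ⊕ Fin m) ℂ)
    (X₁ X₂ Y₁ Y₂ : ℤ → Matrix (Fin m) (Fin m) ℂ)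
    (hX : ∀ k : ℤ, fromRows (ρ k * X₂ (k + 1)) (ρ (k - 1) * X₁ (k - 1))
        = C k * fromRows (X₁ k) (X₂ k))
    (hY : ∀ k : ℤ, fromRows (ρ k * Y₂ (k + 1)) (ρ (k - 1) * Y₁ (k - 1))
        = C k * fromRows (Y₁ k) (Y₂ k)) :
    ∀ k : ℤ, fromRows (ρ k * (X₂ (k + 1) - Y₂ (k + 1))) (ρ (k - 1) * (X₁ (k - 1) - Y₁ (k - 1)))
      = C k * fromRows (X₁ k - Y₁ k) (X₂ k - Y₂ k) := by
  have := stmt10_comb ρ C X₁ X₂ Y₁ Y₂ 1 (-1) hX hY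
  intro k
  have h := this k
  simpa [mul_one, Matrix.mul_neg, sub_eq_add_neg] using h

/-- Linear fractional transformation of M-functions under change of
boundary condition at k₀: with fundamental solutions Ψ_α̃, Ψ_γ̃ normalized by
Ψ̂(z,k₀) = I_ρ(k₀)^{-1/2}(α* Jα*) resp. (γ* Jγ*), and the same β̃ boundary data at ℓ,
M_α̃ = [−αJγ* + αγ* M_γ̃][αγ* + αJγ* M_γ̃]^{-1}. -/
theorem stmt10 {m : ℕ} (ρ : ℤ → Matrix (Fin m) (Fin m) ℂ)
    (A B : ℤ → Matrix (Fin m ⊕ Fin m) (Fin m ⊕ Fin m) ℂ)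
    (hρ : ∀ k, (ρ k).PosDef) (hA : ∀ k, (A k).PosSemidef) (hB : ∀ k, (B k)ᴴ = B k)
    (z : ℂ)
    (hinv12 : ∀ k : ℤ, IsUnit ((z • A k + B k).toBlocks₁₂))
    (hinv21 : ∀ k : ℤ, IsUnit ((z • A k + B k).toBlocks₂₁))
    (k₀ ℓ : ℤ) (hℓ : ℓ ≠ k₀)
    (α γ β : Matrix (Fin m) (Fin m ⊕ Fin m) ℂ)
    (hα1 : α * αᴴ = 1) (hα2 : α * Jmat m * αᴴ = 0)
    (hγ1 : γ * γᴴ = 1) (hγ2 : γ * Jmat m * γᴴ = 0)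
    (Θα₁ Θα₂ Φα₁ Φα₂ Θγ₁ Θγ₂ Φγ₁ Φγ₂ : ℤ → Matrix (Fin m) (Fin m) ℂ)
    (hsolΘα : ∀ k : ℤ, fromRows (ρ k * Θα₂ (k + 1)) (ρ (k - 1) * Θα₁ (k - 1))
        = (z • A k + B k) * fromRows (Θα₁ k) (Θα₂ k))
    (hsolΦα : ∀ k : ℤ, fromRows (ρ k * Φα₂ (k + 1)) (ρ (k - 1) * Φα₁ (k - 1))
        = (z • A k + B k) * fromRows (Φα₁ k) (Φα₂ k))
    (hsolΘγ : ∀ k : ℤ, fromRows (ρ k * Θγ₂ (k + 1)) (ρ (k - 1) * Θγ₁ (k - 1))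
        = (z • A k + B k) * fromRows (Θγ₁ k) (Θγ₂ k))
    (hsolΦγ : ∀ k : ℤ, fromRows (ρ k * Φγ₂ (k + 1)) (ρ (k - 1) * Φγ₁ (k - 1))
        = (z • A k + B k) * fromRows (Φγ₁ k) (Φγ₂ k))
    (hnormα : fromCols (fromRows (Θα₁ k₀) (Θα₂ (k₀ + 1))) (fromRows (Φα₁ k₀) (Φα₂ (k₀ + 1)))
        = (fromBlocks (hρ k₀).posSemidef.sqrt 0 0 (hρ k₀).posSemidef.sqrt)⁻¹ *
          fromCols αᴴ (Jmat m * αᴴ))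
    (hnormγ : fromCols (fromRows (Θγ₁ k₀) (Θγ₂ (k₀ + 1))) (fromRows (Φγ₁ k₀) (Φγ₂ (k₀ + 1)))
        = (fromBlocks (hρ k₀).posSemidef.sqrt 0 0 (hρ k₀).posSemidef.sqrt)⁻¹ *
          fromCols γᴴ (Jmat m * γᴴ))
    (Mα Mγ : Matrix (Fin m) (Fin m) ℂ)
    (hMα : Mα = -((β * fromBlocks (hρ ℓ).posSemidef.sqrt 0 0 (hρ ℓ).posSemidef.sqrt *
          fromRows (Φα₁ ℓ) (Φα₂ (ℓ + 1)))⁻¹ *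
        (β * fromBlocks (hρ ℓ).posSemidef.sqrt 0 0 (hρ ℓ).posSemidef.sqrt *
          fromRows (Θα₁ ℓ) (Θα₂ (ℓ + 1)))))
    (hMγ : Mγ = -((β * fromBlocks (hρ ℓ).posSemidef.sqrt 0 0 (hρ ℓ).posSemidef.sqrt *
          fromRows (Φγ₁ ℓ) (Φγ₂ (ℓ + 1)))⁻¹ *
        (β * fromBlocks (hρ ℓ).posSemidef.sqrt 0 0 (hρ ℓ).posSemidef.sqrt *
          fromRows (Θγ₁ ℓ) (Θγ₂ (ℓ + 1)))))
    (huα : IsUnit (β * fromBlocks (hρ ℓ).posSemidef.sqrt 0 0 (hρ ℓ).posSemidef.sqrt *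
        fromRows (Φα₁ ℓ) (Φα₂ (ℓ + 1))))
    (huγ : IsUnit (β * fromBlocks (hρ ℓ).posSemidef.sqrt 0 0 (hρ ℓ).posSemidef.sqrt *
        fromRows (Φγ₁ ℓ) (Φγ₂ (ℓ + 1))))
    (hX : IsUnit (α * γᴴ + α * Jmat m * γᴴ * Mγ)) :
    Mα = (-(α * Jmat m * γᴴ) + α * γᴴ * Mγ) * (α * γᴴ + α * Jmat m * γᴴ * Mγ)⁻¹ := by
  set S := α * γᴴ with hS_def
  set R := α * Jmat m * γᴴ with hR_def
  -- J² = -1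
  have hJJ : Jmat m * Jmat m = (-1 : Matrix (Fin m ⊕ Fin m) (Fin m ⊕ Fin m) ℂ) := by
    have h1 : (-1 : Matrix (Fin m ⊕ Fin m) (Fin m ⊕ Fin m) ℂ)
        = fromBlocks (-1) 0 0 (-1) := by
      rw [← Matrix.fromBlocks_one, Matrix.fromBlocks_neg]
      norm_num
    rw [Jmat, Matrix.fromBlocks_multiply, h1]
    norm_num
  -- the transfer matrix T
  have hQP : fromRows α (-(α * Jmat m)) * fromCols αᴴ (Jmat m * αᴴ)
      = (1 : Matrix (Fin m ⊕ Fin m) (Fin m ⊕ Fin m) ℂ) := by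
    rw [Matrix.fromRows_mul_fromCols, ← Matrix.fromBlocks_one]
    refine Matrix.fromBlocks_inj.mpr ⟨?_, ?_, ?_, ?_⟩
    · exact hα1
    · rw [← Matrix.mul_assoc]; exact hα2
    · rw [Matrix.neg_mul, hα2, neg_zero]
    · rw [Matrix.neg_mul, Matrix.mul_assoc, ← Matrix.mul_assoc (Jmat m), hJJ,
        Matrix.neg_mul, Matrix.one_mul, Matrix.mul_neg, neg_neg, hα1]
  have hPQ : fromCols αᴴ (Jmat m * αᴴ) * fromRows α (-(α * Jmat m))
      = (1 : Matrix (Fin m ⊕ Fin m) (Fin m ⊕ Fin m) ℂ) :=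
    mul_eq_one_comm.mp hQP
  have hTQ : fromBlocks S R (-R) S
      = fromRows α (-(α * Jmat m)) * fromCols γᴴ (Jmat m * γᴴ) := by
    rw [Matrix.fromRows_mul_fromCols]
    refine Matrix.fromBlocks_inj.mpr ⟨?_, ?_, ?_, ?_⟩
    · rw [hS_def]
    · rw [hR_def, ← Matrix.mul_assoc]
    · rw [hR_def, Matrix.neg_mul]
    · rw [hS_def, Matrix.neg_mul, Matrix.mul_assoc, ← Matrix.mul_assoc (Jmat m), hJJ,
        Matrix.neg_mul, Matrix.one_mul, Matrix.mul_neg, neg_neg]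
  have hT : fromCols αᴴ (Jmat m * αᴴ) * fromBlocks S R (-R) S
      = fromCols γᴴ (Jmat m * γᴴ) := by
    rw [hTQ, ← Matrix.mul_assoc, hPQ, Matrix.one_mul]
  -- relation between the fundamental solutions at k₀
  have hstate : fromCols (fromRows (Θγ₁ k₀) (Θγ₂ (k₀ + 1))) (fromRows (Φγ₁ k₀) (Φγ₂ (k₀ + 1)))
      = fromCols
          (fromRows (Θα₁ k₀) (Θα₂ (k₀ + 1)) * S + fromRows (Φα₁ k₀) (Φα₂ (k₀ + 1)) * -R)
          (fromRows (Θα₁ k₀) (Θα₂ (k₀ + 1)) * R + fromRows (Φα₁ k₀) (Φα₂ (k₀ + 1)) * S) := by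
    rw [hnormγ, ← hT, ← Matrix.mul_assoc, ← hnormα, Matrix.fromCols_mul_fromBlocks]
  obtain ⟨hcolΘ, hcolΦ⟩ := Matrix.fromCols_inj hstate
  rw [Matrix.fromRows_mul, Matrix.fromRows_mul, ← stmt10_fromRows_add] at hcolΘ hcolΦ
  obtain ⟨hΘ1, hΘ2⟩ := Matrix.fromRows_inj hcolΘ
  obtain ⟨hΦ1, hΦ2⟩ := Matrix.fromRows_inj hcolΦ
  -- propagate to ℓ via uniqueness
  have hρu : ∀ k, IsUnit (ρ k) := fun k => (hρ k).isUnit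
  have hcombΘ := stmt10_comb ρ (fun k => z • A k + B k) Θα₁ Θα₂ Φα₁ Φα₂ S (-R) hsolΘα hsolΦα
  have hcombΦ := stmt10_comb ρ (fun k => z • A k + B k) Θα₁ Θα₂ Φα₁ Φα₂ R S hsolΘα hsolΦα
  have hdiffΘ := stmt10_sub ρ (fun k => z • A k + B k) Θγ₁ Θγ₂
    (fun k => Θα₁ k * S + Φα₁ k * -R) (fun k => Θα₂ k * S + Φα₂ k * -R) hsolΘγ hcombΘ
  have hdiffΦ := stmt10_sub ρ (fun k => z • A k + B k) Φγ₁ Φγ₂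
    (fun k => Θα₁ k * R + Φα₁ k * S) (fun k => Θα₂ k * R + Φα₂ k * S) hsolΦγ hcombΦ
  have hzΘ := stmt10_unique ρ (fun k => z • A k + B k) hρu hinv12 hinv21
    (fun k => Θγ₁ k - (Θα₁ k * S + Φα₁ k * -R))
    (fun k => Θγ₂ k - (Θα₂ k * S + Φα₂ k * -R)) hdiffΘ k₀
    (by simp only [sub_eq_zero]; exact hΘ1) (by simp only [sub_eq_zero]; exact hΘ2) ℓ
  have hzΦ := stmt10_unique ρ (fun k => z • A k + B k) hρu hinv12 hinv21
    (fun k => Φγ₁ k - (Θα₁ k * R + Φα₁ k * S))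
    (fun k => Φγ₂ k - (Θα₂ k * R + Φα₂ k * S)) hdiffΦ k₀
    (by simp only [sub_eq_zero]; exact hΦ1) (by simp only [sub_eq_zero]; exact hΦ2) ℓ
  have hΘℓ1 : Θγ₁ ℓ = Θα₁ ℓ * S + Φα₁ ℓ * -R := by
    have := hzΘ.1; rwa [sub_eq_zero] at this
  have hΘℓ2 : Θγ₂ (ℓ + 1) = Θα₂ (ℓ + 1) * S + Φα₂ (ℓ + 1) * -R := by
    have := hzΘ.2; rwa [sub_eq_zero] at this
  have hΦℓ1 : Φγ₁ ℓ = Θα₁ ℓ * R + Φα₁ ℓ * S := by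
    have := hzΦ.1; rwa [sub_eq_zero] at this
  have hΦℓ2 : Φγ₂ (ℓ + 1) = Θα₂ (ℓ + 1) * R + Φα₂ (ℓ + 1) * S := by
    have := hzΦ.2; rwa [sub_eq_zero] at this
  -- abbreviations at ℓ
  set E := fromBlocks (hρ ℓ).posSemidef.sqrt 0 0 (hρ ℓ).posSemidef.sqrt with hE_def
  set Vα := β * E * fromRows (Θα₁ ℓ) (Θα₂ (ℓ + 1)) with hVα_def
  set Wα := β * E * fromRows (Φα₁ ℓ) (Φα₂ (ℓ + 1)) with hWα_def
  set Vγ := β * E * fromRows (Θγ₁ ℓ) (Θγ₂ (ℓ + 1)) with hVγ_def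
  set Wγ := β * E * fromRows (Φγ₁ ℓ) (Φγ₂ (ℓ + 1)) with hWγ_def
  have hVγ2 : Vγ = Vα * S + Wα * -R := by
    rw [hVγ_def, hΘℓ1, hΘℓ2, stmt10_fromRows_add, ← Matrix.fromRows_mul, ← Matrix.fromRows_mul,
      Matrix.mul_add, ← Matrix.mul_assoc (β * E) _ S, ← Matrix.mul_assoc (β * E) _ (-R),
      ← hVα_def, ← hWα_def]
  have hWγ2 : Wγ = Vα * R + Wα * S := by
    rw [hWγ_def, hΦℓ1, hΦℓ2, stmt10_fromRows_add, ← Matrix.fromRows_mul, ← Matrix.fromRows_mul,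
      Matrix.mul_add, ← Matrix.mul_assoc (β * E) _ R, ← Matrix.mul_assoc (β * E) _ S,
      ← hVα_def, ← hWα_def]
  -- final algebra
  have hdetγ : IsUnit Wγ.det := (Matrix.isUnit_iff_isUnit_det Wγ).mp huγ
  have hdetα : IsUnit Wα.det := (Matrix.isUnit_iff_isUnit_det Wα).mp huα
  have hdetX : IsUnit (S + R * Mγ).det := (Matrix.isUnit_iff_isUnit_det _).mp hX
  have hWγMγ : Wγ * Mγ = -Vγ := by
    rw [hMγ, Matrix.mul_neg, ← Matrix.mul_assoc, Matrix.mul_nonsing_inv _ hdetγ, Matrix.one_mul]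
  have key : Vα * (S + R * Mγ) = -(Wα * (-R + S * Mγ)) := by
    rw [hVγ2, hWγ2] at hWγMγ
    simp only [Matrix.add_mul, Matrix.mul_add, Matrix.mul_neg, Matrix.neg_mul, neg_add_rev,
      neg_neg, Matrix.mul_assoc] at hWγMγ ⊢
    have h' : Vα * (R * Mγ) = Wα * R + -(Vα * S) - Wα * (S * Mγ) := by
      rw [eq_sub_iff_add_eq]
      exact hWγMγ
    rw [h']
    abel
  have hVα2 : Vα = -(Wα * (-R + S * Mγ)) * (S + R * Mγ)⁻¹ := by
    rw [← key]
    exact (Matrix.mul_nonsing_inv_cancel_right _ _ hdetX).symm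
  rw [hMα, hVα2, Matrix.neg_mul, Matrix.mul_neg, neg_neg, Matrix.mul_assoc Wα,
    Matrix.nonsing_inv_mul_cancel_left _ _ hdetα]
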